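/- Let U ⊂ ℂⁿ be a bounded domain, ε > 0, and (ψ_k) a sequence of holomorphic maps ψ_k : U → ℂⁿ such that each ψ_k is injective with holomorphic inverse on ψ_k(U), |det Dψ_k(z)| ≥ ε for all k and all z ∈ U, and ψ_k → ψ uniformly on U for some map ψ : U → ℂⁿ. Then ψ is injective and has a holomorphic inverse ψ⁻¹ : ψ(U) → U. -/

import Mathlib

open Filter Topology Metric Set
open scoped NNReal

private lemma my_cauchy_bound {E F : Type*} [NormedAddCommGroup E] [NormedSpace ℂ E]
    [NormedAddCommGroup F] [NormedSpace ℂ F]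
    {f : E → F} {s : Set E} (hs : IsOpen s) (hf : DifferentiableOn ℂ f s)
    {z : E} {R C : ℝ} (hR : 0 < R) (hball : closedBall z R ⊆ s)
    (hC : ∀ x ∈ closedBall z R, ‖f x‖ ≤ C) :
    ‖fderiv ℂ f z‖ ≤ C / R := by
  have hzs : z ∈ s := hball (mem_closedBall_self hR.le)
  have hdz : DifferentiableAt ℂ f z := hf.differentiableAt (hs.mem_nhds hzs)
  have hC0 : 0 ≤ C := le_trans (norm_nonneg _) (hC z (mem_closedBall_self hR.le))
  refine ContinuousLinearMap.opNorm_le_bound _ (by positivity) fun v => ?_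
  rcases eq_or_ne v 0 with rfl | hv
  · simp [div_nonneg hC0 hR.le]
  have hvpos : 0 < ‖v‖ := norm_pos_iff.2 hv
  set r : ℝ := R / ‖v‖ with hr
  have hrpos : 0 < r := div_pos hR hvpos
  set g : ℂ → F := fun w => f (z + w • v) with hg
  have hmaps : ∀ w : ℂ, w ∈ closedBall (0:ℂ) r → z + w • v ∈ closedBall z R := by
    intro w hw
    simp only [mem_closedBall, dist_eq_norm] at hw ⊢
    have h1 : ‖z + w • v - z‖ = ‖w‖ * ‖v‖ := by
      rw [add_sub_cancel_left, norm_smul]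
    rw [h1]
    calc ‖w‖ * ‖v‖ ≤ r * ‖v‖ := by
          apply mul_le_mul_of_nonneg_right _ hvpos.le
          simpa using hw
      _ = R := div_mul_cancel₀ _ hvpos.ne'
  have hgd : DifferentiableOn ℂ g (closedBall (0:ℂ) r) := by
    intro w hw
    have h1 : DifferentiableAt ℂ (fun w : ℂ => z + w • v) w :=
      (differentiableAt_id.smul_const v).const_add z
    exact ((hf.differentiableAt (hs.mem_nhds (hball (hmaps w hw)))).comp w h1).differentiableWithinAt
  have hdc : DiffContOnCl ℂ g (ball (0:ℂ) r) :=
    ⟨hgd.mono ball_subset_closedBall, by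
      rw [closure_ball _ hrpos.ne']
      exact hgd.continuousOn⟩
  have hder : HasDerivAt g (fderiv ℂ f z v) 0 := by
    have h1 : HasDerivAt (fun w : ℂ => z + w • v) v 0 := by
      simpa using ((hasDerivAt_id (0:ℂ)).smul_const v).const_add z
    have hdz' : HasFDerivAt f (fderiv ℂ f z) (z + (0:ℂ) • v) := by
      simpa using hdz.hasFDerivAt
    have h2 := hdz'.comp_hasDerivAt (0:ℂ) h1
    exact h2
  have hb := Complex.norm_deriv_le_of_forall_mem_sphere_norm_le hrpos hdc
    (fun w hw => hC _ (hmaps w (sphere_subset_closedBall hw)))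
  rw [hder.deriv] at hb
  calc ‖fderiv ℂ f z v‖ ≤ C / r := hb
    _ = C / R * ‖v‖ := by
        rw [hr]
        field_simp

/-- The derivative of a holomorphic function on an open set is continuous there. -/
private lemma my_fderiv_continuousOn {E F : Type*} [NormedAddCommGroup E] [NormedSpace ℂ E]
    [NormedAddCommGroup F] [NormedSpace ℂ F]
    {f : E → F} {s : Set E} (hs : IsOpen s) (hf : DifferentiableOn ℂ f s) :
    ContinuousOn (fderiv ℂ f) s := by
  intro z₀ hz₀
  refine (Metric.continuousAt_iff.2 fun ε hε => ?_).continuousWithinAt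
  set A₀ := fderiv ℂ f z₀ with hA₀
  set c : ℝ := ε / 4 with hc
  have hc0 : 0 < c := by positivity
  -- little-o property of the derivative at `z₀`
  have hlo := ((hf.differentiableAt (hs.mem_nhds hz₀)).hasFDerivAt.isLittleO).def hc0
  rcases Metric.mem_nhds_iff.1 (inter_mem hlo (hs.mem_nhds hz₀)) with ⟨δ₁, hδ₁, hδball⟩
  set δ := δ₁ / 3 with hδ
  have hδ0 : 0 < δ := by positivity
  refine ⟨δ, hδ0, fun {z} hz => ?_⟩
  rw [dist_eq_norm] at hz
  -- the auxiliary function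
  set h : E → F := fun x => f x - f z₀ - A₀ (x - z₀) with hh
  have hhd : DifferentiableOn ℂ h s := by
    intro x hx
    apply DifferentiableWithinAt.sub
    · exact (hf x hx).sub_const (f z₀)
    · exact (A₀.differentiable.comp (differentiable_id.sub_const z₀)).differentiableAt
        |>.differentiableWithinAt
  have hzs : z ∈ s := by
    apply (hδball _).2
    simp only [mem_ball, dist_eq_norm]
    calc ‖z - z₀‖ < δ := hz
      _ < δ₁ := by rw [hδ]; linarith
  -- bound h on closedBall z δ
  have hsub : closedBall z δ ⊆ ball z₀ δ₁ := by
    intro x hx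
    simp only [mem_closedBall, dist_eq_norm] at hx
    simp only [mem_ball, dist_eq_norm]
    calc ‖x - z₀‖ = ‖(x - z) + (z - z₀)‖ := by rw [sub_add_sub_cancel]
      _ ≤ ‖x - z‖ + ‖z - z₀‖ := norm_add_le _ _
      _ < δ + δ := by have := hz; linarith [hx]
      _ < δ₁ := by rw [hδ]; linarith
  have hCb : ∀ x ∈ closedBall z δ, ‖h x‖ ≤ c * (2 * δ) := by
    intro x hx
    have h1 := (hδball (hsub hx)).1
    simp only [mem_setOf_eq] at h1
    calc ‖h x‖ ≤ c * ‖x - z₀‖ := h1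
      _ ≤ c * (2 * δ) := by
          apply mul_le_mul_of_nonneg_left _ hc0.le
          simp only [mem_closedBall, dist_eq_norm] at hx
          calc ‖x - z₀‖ = ‖(x - z) + (z - z₀)‖ := by rw [sub_add_sub_cancel]
            _ ≤ ‖x - z‖ + ‖z - z₀‖ := norm_add_le _ _
            _ ≤ 2 * δ := by linarith [hz.le, hx]
  have hball2 : closedBall z δ ⊆ s := fun x hx => (hδball (hsub hx)).2
  have hkey := my_cauchy_bound hs hhd hδ0 hball2 hCb
  -- compute fderiv of h at z
  have hfh : fderiv ℂ h z = fderiv ℂ f z - A₀ := by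
    have h1 : HasFDerivAt (fun x => A₀ (x - z₀)) A₀ z := by
      have := A₀.hasFDerivAt.comp z ((hasFDerivAt_id z).sub_const z₀)
      simpa [Function.comp_def] using this
    have h2 : HasFDerivAt h (fderiv ℂ f z - A₀) z :=
      (((hf.differentiableAt (hs.mem_nhds hzs)).hasFDerivAt.sub_const (f z₀)).sub h1)
    exact h2.fderiv
  rw [hfh] at hkey
  rw [dist_eq_norm]
  calc ‖fderiv ℂ f z - A₀‖ ≤ c * (2 * δ) / δ := hkey
    _ = 2 * c := by field_simp
    _ < ε := by rw [hc]; linarith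

/-- Uniform limits of holomorphic maps: the limit is holomorphic and the derivatives
converge locally uniformly. -/
private lemma my_limit_lemma {E F : Type*} [NormedAddCommGroup E] [NormedSpace ℂ E]
    [NormedAddCommGroup F] [NormedSpace ℂ F] [ProperSpace E] [CompleteSpace F]
    {f : ℕ → E → F} {g : E → F} {U : Set E} (hU : IsOpen U)
    (hf : ∀ k, DifferentiableOn ℂ (f k) U)
    (hconv : TendstoUniformlyOn f g atTop U) :
    ∃ g' : E → (E →L[ℂ] F),
      TendstoLocallyUniformlyOn (fun k => fderiv ℂ (f k)) g' atTop U ∧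
      ∀ z ∈ U, HasFDerivAt g (g' z) z := by
  have hCauchyf : UniformCauchySeqOn f atTop U := hconv.uniformCauchySeqOn
  -- uniform Cauchy property of the derivatives on compacts
  have hUC : ∀ K, K ⊆ U → IsCompact K →
      UniformCauchySeqOn (fun k => fderiv ℂ (f k)) atTop K := by
    intro K hKU hK
    rw [Metric.uniformCauchySeqOn_iff]
    intro ε hε
    obtain ⟨δ, hδ0, hδU⟩ := hK.exists_cthickening_subset_open hU hKU
    have hεδ : 0 < ε * δ / 2 := by positivity
    obtain ⟨N, hN⟩ := (Metric.uniformCauchySeqOn_iff.1 hCauchyf) (ε * δ / 2) hεδ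
    refine ⟨N, fun m hm k hk z hz => ?_⟩
    have hball : closedBall z δ ⊆ U :=
      (closedBall_subset_cthickening hz δ).trans hδU
    have hzU : z ∈ U := hball (mem_closedBall_self hδ0.le)
    set h : E → F := fun x => f m x - f k x with hh
    have hhd : DifferentiableOn ℂ h U := (hf m).sub (hf k)
    have hCb : ∀ x ∈ closedBall z δ, ‖h x‖ ≤ ε * δ / 2 := by
      intro x hx
      have := hN m hm k hk x (hball hx)
      rw [dist_eq_norm] at this
      exact this.le
    have hkey := my_cauchy_bound hU hhd hδ0 hball hCb
    have hfh : fderiv ℂ h z = fderiv ℂ (f m) z - fderiv ℂ (f k) z :=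
      fderiv_sub ((hf m).differentiableAt (hU.mem_nhds hzU))
        ((hf k).differentiableAt (hU.mem_nhds hzU))
    rw [hfh] at hkey
    rw [dist_eq_norm]
    calc ‖fderiv ℂ (f m) z - fderiv ℂ (f k) z‖ ≤ ε * δ / 2 / δ := hkey
      _ = ε / 2 := by field_simp
      _ < ε := by linarith
  -- pointwise limit of the derivatives
  have hptwise : ∀ z ∈ U, ∃ L, Tendsto (fun k => fderiv ℂ (f k) z) atTop (𝓝 L) := by
    intro z hz
    have hc : Cauchy (map (fun k => fderiv ℂ (f k) z) atTop) :=
      (hUC {z} (by simpa using hz) isCompact_singleton).cauchy_map rfl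
    exact CompleteSpace.complete hc
  choose! g' hg' using hptwise
  refine ⟨g', ?_, ?_⟩
  · rw [tendstoLocallyUniformlyOn_iff_forall_isCompact hU]
    intro K hKU hK
    exact (hUC K hKU hK).tendstoUniformlyOn_of_tendsto fun z hz => hg' z (hKU hz)
  · intro z hz
    have hTLU : TendstoLocallyUniformlyOn (fderiv ℂ ∘ f) g' atTop U := by
      rw [tendstoLocallyUniformlyOn_iff_forall_isCompact hU]
      intro K hKU hK
      exact (hUC K hKU hK).tendstoUniformlyOn_of_tendsto fun x hx => hg' x (hKU hx)
    exact hasFDerivAt_of_tendsto_locally_uniformly_on' hU hTLU hf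
      (fun x hx => hconv.tendsto_at hx) hz

/-- If the derivatives of `f k` converge locally uniformly on `U` to `g'`, the values converge
pointwise to `g`, and `g' p` is invertible, then eventually `f k` attains the value `g p`
near `p`. -/
private lemma my_locally_onto {E : Type*} [NormedAddCommGroup E] [NormedSpace ℂ E]
    [FiniteDimensional ℂ E]
    {U : Set E} (hU : IsOpen U) {f : ℕ → E → E} {g : E → E} {g' : E → (E →L[ℂ] E)}
    (hfd : ∀ k, DifferentiableOn ℂ (f k) U)
    (hconv' : TendstoLocallyUniformlyOn (fun k => fderiv ℂ (f k)) g' atTop U)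
    (hg'cont : ContinuousOn g' U)
    (hptw : ∀ z ∈ U, Tendsto (fun k => f k z) atTop (𝓝 (g z)))
    {p : E} (hp : p ∈ U) (hdet : LinearMap.det (↑(g' p) : E →ₗ[ℂ] E) ≠ 0)
    {r : ℝ} (hr : 0 < r) :
    ∀ᶠ k in atTop, ∃ x ∈ closedBall p r ∩ U, f k x = g p := by
  rcases subsingleton_or_nontrivial E with hS | hNT
  · exact Eventually.of_forall fun k =>
      ⟨p, ⟨mem_closedBall_self hr.le, hp⟩, Subsingleton.elim _ _⟩
  -- the invertible linear approximation
  set A : E ≃L[ℂ] E :=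
    (LinearMap.equivOfDetNeZero (↑(g' p) : E →ₗ[ℂ] E) hdet).toContinuousLinearEquiv with hA
  have hAcoe : (A : E →L[ℂ] E) = g' p := by ext x; rfl
  set N : ℝ≥0 := ‖(A.symm : E →L[ℂ] E)‖₊ with hNdef
  have hN0 : 0 < N := by
    rw [pos_iff_ne_zero]
    intro h0
    have hz : (A.symm : E →L[ℂ] E) = 0 := by
      rwa [nnnorm_eq_zero] at h0
    obtain ⟨x, hx⟩ := exists_ne (0 : E)
    apply hx
    have := congrArg (fun T : E →L[ℂ] E => T (A x)) hz
    simpa using this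
  have hNinv0 : (0:ℝ≥0) < N⁻¹ := by positivity
  set c : ℝ≥0 := N⁻¹ / 2 with hc
  have hcN : c < N⁻¹ := NNReal.half_lt_self hNinv0.ne'
  have hc0 : (0:ℝ) < (c:ℝ) := by
    have : (0:ℝ≥0) < c := by positivity
    exact_mod_cast this
  -- choose a radius
  obtain ⟨δ₁, hδ₁0, hδ₁⟩ := Metric.continuousAt_iff.1
    (hg'cont.continuousAt (hU.mem_nhds hp)) ((c:ℝ)/2) (by positivity)
  obtain ⟨δ₂, hδ₂0, hδ₂⟩ := Metric.isOpen_iff.1 hU p hp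
  set r' : ℝ := min (min (δ₁/2) (δ₂/2)) r with hr'
  have hr'0 : 0 < r' := by positivity
  have hr'r : r' ≤ r := min_le_right _ _
  have hball : closedBall p r' ⊆ U := by
    intro x hx
    apply hδ₂
    simp only [mem_closedBall] at hx
    simp only [mem_ball]
    calc dist x p ≤ r' := hx
      _ ≤ δ₂/2 := le_trans (min_le_left _ _) (min_le_right _ _)
      _ < δ₂ := by linarith
  have hg'near : ∀ x ∈ closedBall p r', ‖g' x - g' p‖ < (c:ℝ)/2 := by
    intro x hx
    rw [← dist_eq_norm]
    apply hδ₁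
    simp only [mem_closedBall] at hx
    calc dist x p ≤ r' := hx
      _ ≤ δ₁/2 := le_trans (min_le_left _ _) (min_le_left _ _)
      _ < δ₁ := by linarith
  -- uniform convergence on the closed ball
  have hTU : TendstoUniformlyOn (fun k => fderiv ℂ (f k)) g' atTop (closedBall p r') :=
    (tendstoLocallyUniformlyOn_iff_forall_isCompact hU).1 hconv' _ hball
      (isCompact_closedBall p r')
  have hev1 : ∀ᶠ k in atTop, ∀ x ∈ closedBall p r',
      dist (g' x) (fderiv ℂ (f k) x) < (c:ℝ)/2 :=
    Metric.tendstoUniformlyOn_iff.1 hTU ((c:ℝ)/2) (by positivity)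
  -- pointwise convergence at p
  set ρ : ℝ := ((N⁻¹ - c : ℝ≥0) : ℝ) * r' with hρ
  have hρ0 : 0 < ρ := by
    apply mul_pos _ hr'0
    have : (0:ℝ≥0) < N⁻¹ - c := tsub_pos_of_lt hcN
    exact_mod_cast this
  have hev2 : ∀ᶠ k in atTop, dist (f k p) (g p) < ρ :=
    (Metric.tendsto_nhds.1 (hptw p hp)) ρ hρ0
  filter_upwards [hev1, hev2] with k hk1 hk2
  -- the approximation property
  have happrox : ApproximatesLinearOn (f k) (A : E →L[ℂ] E) (closedBall p r') c := by
    intro x hx y hy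
    set q : E → E := fun x => f k x - A x with hq
    have hqd : ∀ u ∈ closedBall p r', DifferentiableAt ℂ q u := fun u hu =>
      ((hfd k).differentiableAt (hU.mem_nhds (hball hu))).sub (A.differentiable.differentiableAt)
    have hqb : ∀ u ∈ closedBall p r', ‖fderiv ℂ q u‖ ≤ (c:ℝ) := by
      intro u hu
      have hfq : fderiv ℂ q u = fderiv ℂ (f k) u - (A : E →L[ℂ] E) := by
        have h1 : HasFDerivAt q (fderiv ℂ (f k) u - (A : E →L[ℂ] E)) u :=
          ((hfd k).differentiableAt (hU.mem_nhds (hball hu))).hasFDerivAt.sub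
            (A : E →L[ℂ] E).hasFDerivAt
        exact h1.fderiv
      rw [hfq, hAcoe]
      calc ‖fderiv ℂ (f k) u - g' p‖
          = ‖(fderiv ℂ (f k) u - g' u) + (g' u - g' p)‖ := by rw [sub_add_sub_cancel]
        _ ≤ ‖fderiv ℂ (f k) u - g' u‖ + ‖g' u - g' p‖ := norm_add_le _ _
        _ ≤ (c:ℝ)/2 + (c:ℝ)/2 := by
            gcongr
            · rw [← dist_eq_norm, dist_comm]; exact (hk1 u hu).le
            · exact (hg'near u hu).le
        _ = (c:ℝ) := by ring
    have := (convex_closedBall p r').norm_image_sub_le_of_norm_fderiv_le hqd hqb hy hx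
    have heq : f k x - f k y - (A : E →L[ℂ] E) (x - y) = q x - q y := by
      simp only [hq, map_sub]
      abel
    rw [heq]
    exact this
  -- surjectivity near p
  have hsurj := happrox.surjOn_closedBall_of_nonlinearRightInverse
    A.toNonlinearRightInverse hr'0.le (subset_refl _)
  have hmem : g p ∈ closedBall (f k p) (((A.toNonlinearRightInverse.nnnorm : ℝ)⁻¹ - c) * r') := by
    have hnn : A.toNonlinearRightInverse.nnnorm = N := rfl
    rw [hnn]
    simp only [mem_closedBall]
    rw [dist_comm]
    calc dist (f k p) (g p) ≤ ρ := hk2.le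
      _ ≤ ((N:ℝ)⁻¹ - (c:ℝ)) * r' := by
          rw [hρ]
          apply mul_le_mul_of_nonneg_right _ hr'0.le
          rw [NNReal.coe_sub hcN.le]
          simp [NNReal.coe_inv]
  obtain ⟨x, hx, hfx⟩ := hsurj hmem
  exact ⟨x, ⟨closedBall_subset_closedBall hr'r hx, hball hx⟩, hfx⟩

/-- A uniform limit of injective holomorphic maps with holomorphic inverses
and Jacobian determinant bounded below on a bounded domain is injective with a
holomorphic inverse. -/
theorem limit_of_biholomorphisms_is_biholomorphism
    (n : ℕ) (U : Set (Fin n → ℂ))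
    (hUopen : IsOpen U) (hUconn : IsConnected U) (hUbdd : Bornology.IsBounded U)
    (ε : ℝ) (hε : 0 < ε)
    (ψseq : ℕ → (Fin n → ℂ) → (Fin n → ℂ)) (ψ : (Fin n → ℂ) → (Fin n → ℂ))
    (hhol : ∀ k, DifferentiableOn ℂ (ψseq k) U)
    (hinj : ∀ k, Set.InjOn (ψseq k) U)
    (hinvs : ∀ k, ∃ φ : (Fin n → ℂ) → (Fin n → ℂ),
      DifferentiableOn ℂ φ (ψseq k '' U) ∧ ∀ z ∈ U, φ (ψseq k z) = z)
    (hdet : ∀ k, ∀ z ∈ U, ε ≤ ‖(LinearMap.det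
      ((fderiv ℂ (ψseq k) z : (Fin n → ℂ) →L[ℂ] (Fin n → ℂ)) :
        (Fin n → ℂ) →ₗ[ℂ] (Fin n → ℂ)))‖)
    (hconv : TendstoUniformlyOn ψseq ψ atTop U) :
    Set.InjOn ψ U ∧ DifferentiableOn ℂ ψ U ∧
    ∃ φ : (Fin n → ℂ) → (Fin n → ℂ),
      DifferentiableOn ℂ φ (ψ '' U) ∧ ∀ z ∈ U, φ (ψ z) = z := by
  classical
  obtain ⟨g', hTLU, hHas⟩ := my_limit_lemma hUopen hhol hconv
  have hψdiff : DifferentiableOn ℂ ψ U := fun z hz =>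
    (hHas z hz).differentiableAt.differentiableWithinAt
  have hfeq : ∀ z ∈ U, fderiv ℂ ψ z = g' z := fun z hz => (hHas z hz).fderiv
  have hfc : ContinuousOn g' U :=
    (my_fderiv_continuousOn hUopen hψdiff).congr fun z hz => (hfeq z hz).symm
  -- determinant bound on the limit
  have hdet' : ∀ z ∈ U, ε ≤ ‖(LinearMap.det (↑(g' z) : (Fin n → ℂ) →ₗ[ℂ] (Fin n → ℂ)))‖ := by
    intro z hz
    have ht : Tendsto (fun k => fderiv ℂ (ψseq k) z) atTop (𝓝 (g' z)) := hTLU.tendsto_at hz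
    have hcont : Continuous fun T : (Fin n → ℂ) →L[ℂ] (Fin n → ℂ) =>
        ‖(LinearMap.det (↑T : (Fin n → ℂ) →ₗ[ℂ] (Fin n → ℂ)))‖ :=
      continuous_norm.comp ContinuousLinearMap.continuous_det
    have ht2 : Tendsto (fun k => ‖(LinearMap.det
        (↑(fderiv ℂ (ψseq k) z) : (Fin n → ℂ) →ₗ[ℂ] (Fin n → ℂ)))‖) atTop
        (𝓝 ‖(LinearMap.det (↑(g' z) : (Fin n → ℂ) →ₗ[ℂ] (Fin n → ℂ)))‖) :=
      (hcont.tendsto (g' z)).comp ht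
    exact ge_of_tendsto ht2 (Eventually.of_forall fun k => hdet k z hz)
  have hdetne : ∀ z ∈ U, LinearMap.det (↑(g' z) : (Fin n → ℂ) →ₗ[ℂ] (Fin n → ℂ)) ≠ 0 := by
    intro z hz h0
    have := hdet' z hz
    rw [h0] at this
    simp at this
    linarith
  have hptw : ∀ z ∈ U, Tendsto (fun k => ψseq k z) atTop (𝓝 (ψ z)) := fun z hz =>
    hconv.tendsto_at hz
  -- injectivity
  have hinjψ : Set.InjOn ψ U := by
    intro a ha b hb hab
    by_contra hne
    have hd : 0 < dist a b := dist_pos.2 hne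
    have hr : 0 < dist a b / 4 := by linarith
    have hEa := my_locally_onto hUopen hhol hTLU hfc hptw ha (hdetne a ha) hr
    have hEb := my_locally_onto hUopen hhol hTLU hfc hptw hb (hdetne b hb) hr
    obtain ⟨k, ⟨x, ⟨hx, hxU⟩, hfx⟩, ⟨y, ⟨hy, hyU⟩, hfy⟩⟩ := (hEa.and hEb).exists
    have hxy : x = y := hinj k hxU hyU (by rw [hfx, hfy, hab])
    rw [mem_closedBall] at hx hy
    have h1 : dist a b ≤ dist a x + dist x b := dist_triangle a x b
    have h2 : dist a x ≤ dist a b / 4 := by rw [dist_comm]; exact hx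
    have h3 : dist x b ≤ dist a b / 4 := by rw [hxy]; exact hy
    linarith
  -- strict derivatives
  have hstrict : ∀ a ∈ U, HasStrictFDerivAt ψ (g' a) a := by
    intro a ha
    apply hasStrictFDerivAt_of_hasFDerivAt_of_continuousAt
      (f' := g') ?_ (hfc.continuousAt (hUopen.mem_nhds ha))
    filter_upwards [hUopen.mem_nhds ha] with y hy using hHas y hy
  -- equivalences
  have hAe : ∀ a ∈ U, ∃ A : (Fin n → ℂ) ≃L[ℂ] (Fin n → ℂ), (A : (Fin n → ℂ) →L[ℂ] (Fin n → ℂ)) = g' a := by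
    intro a ha
    refine ⟨(LinearMap.equivOfDetNeZero (↑(g' a) : (Fin n → ℂ) →ₗ[ℂ] (Fin n → ℂ))
      (hdetne a ha)).toContinuousLinearEquiv, ?_⟩
    ext x; rfl
  -- openness of the image
  have hopen : IsOpen (ψ '' U) := by
    rw [isOpen_iff_mem_nhds]
    rintro w ⟨a, ha, rfl⟩
    obtain ⟨A, hA⟩ := hAe a ha
    have hstr : HasStrictFDerivAt ψ (A : (Fin n → ℂ) →L[ℂ] (Fin n → ℂ)) a := by
      rw [hA]; exact hstrict a ha
    rw [← hstr.map_nhds_eq_of_equiv]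
    exact image_mem_map (hUopen.mem_nhds ha)
  -- the inverse function
  set φ := Function.invFunOn ψ U with hφ
  have hleft : ∀ z ∈ U, φ (ψ z) = z := fun z hz => hinjψ.leftInvOn_invFunOn hz
  refine ⟨hinjψ, hψdiff, φ, ?_, hleft⟩
  rintro w ⟨a, ha, rfl⟩
  obtain ⟨A, hA⟩ := hAe a ha
  have hstr : HasStrictFDerivAt ψ (A : (Fin n → ℂ) →L[ℂ] (Fin n → ℂ)) a := by
    rw [hA]; exact hstrict a ha
  set G := hstr.localInverse ψ A a with hG
  have hev1 : ∀ᶠ y in 𝓝 (ψ a), ψ (G y) = y := hstr.eventually_right_inverse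
  have hev2 : ∀ᶠ y in 𝓝 (ψ a), G y ∈ U := by
    have hc : ContinuousAt G (ψ a) := hstr.localInverse_continuousAt
    have hGa : G (ψ a) = a := hstr.localInverse_apply_image
    have ht : Tendsto G (𝓝 (ψ a)) (𝓝 a) := by
      have := hc.tendsto
      rwa [hGa] at this
    exact ht.eventually (eventually_of_mem (hUopen.mem_nhds ha) fun y hy => hy)
  have hev3 : ∀ᶠ y in 𝓝 (ψ a), y ∈ ψ '' U :=
    eventually_of_mem (hopen.mem_nhds ⟨a, ha, rfl⟩) fun y hy => hy
  have heq : φ =ᶠ[𝓝 (ψ a)] G := by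
    filter_upwards [hev1, hev2, hev3] with y h1 h2 h3
    obtain ⟨z, hz, rfl⟩ := h3
    have h4 : G (ψ z) = z := hinjψ h2 hz h1
    rw [hleft z hz, h4]
  have hGdiff : DifferentiableAt ℂ G (ψ a) :=
    hstr.to_localInverse.differentiableAt
  exact (heq.differentiableAt_iff.2 hGdiff).differentiableWithinAt
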